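/- Let c, d ≥ 2 be integers. Let Γ be the subgroup of (ℂ*)⁵ consisting of tuples (t₀, t₁, t₂, t₃, t₄) satisfying t₁² = t₀t₁t₂t₃t₄, t₂² = t₀t₁t₂t₃t₄, t₃^c·t₄ = t₀t₁t₂t₃t₄ and t₃·t₄^d = t₀t₁t₂t₃t₄, and let χ : Γ → ℂ* be the group homomorphism χ(t₀,t₁,t₂,t₃,t₄) = t₀t₁t₂t₃t₄. Then the kernel of χ is isomorphic, as a group, to (ℤ/2ℤ) × (ℤ/2ℤ) × (ℤ/(cd-1)ℤ). -/

import Mathlib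

/-- Evaluation at the `i`-th coordinate, as a homomorphism `(ℂ*)⁵ → ℂ*`. -/
def ev (i : Fin 5) : (Fin 5 → ℂˣ) →* ℂˣ := Pi.evalMonoidHom (fun _ => ℂˣ) i

/-- The character `χ(t₀,…,t₄) = t₀t₁t₂t₃t₄` on `(ℂ*)⁵`. -/
def prodChar : (Fin 5 → ℂˣ) →* ℂˣ := ev 0 * ev 1 * ev 2 * ev 3 * ev 4

/-- The maximal symmetry group of the loop-type polynomial
`x₁²+x₂²+x₃^c x₄+x₃ x₄^d`: tuples `(t₀,…,t₄)` with `t₁² = t₂² = t₃^c t₄ =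
t₃ t₄^d = t₀t₁t₂t₃t₄`, realized as an intersection of kernels. -/
def gammaLoop (c d : ℕ) : Subgroup (Fin 5 → ℂˣ) :=
  MonoidHom.ker (ev 1 ^ 2 * prodChar⁻¹) ⊓ MonoidHom.ker (ev 2 ^ 2 * prodChar⁻¹) ⊓
    MonoidHom.ker (ev 3 ^ c * ev 4 * prodChar⁻¹) ⊓ MonoidHom.ker (ev 3 * ev 4 ^ d * prodChar⁻¹)


lemma prodChar_apply (t : Fin 5 → ℂˣ) : prodChar t = t 0 * t 1 * t 2 * t 3 * t 4 := rfl

lemma mem_gammaLoop_iff (c d : ℕ) (t : Fin 5 → ℂˣ) :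
    t ∈ gammaLoop c d ↔ (t 1 ^ 2 * (prodChar t)⁻¹ = 1 ∧ t 2 ^ 2 * (prodChar t)⁻¹ = 1 ∧
      t 3 ^ c * t 4 * (prodChar t)⁻¹ = 1 ∧ t 3 * t 4 ^ d * (prodChar t)⁻¹ = 1) := by
  simp [gammaLoop, MonoidHom.mem_ker, ev, prodChar, and_assoc]

-- the data characterization of the kernel
lemma ker_iff (c d : ℕ) (t : Fin 5 → ℂˣ) :
    (t ∈ gammaLoop c d ∧ prodChar t = 1) ↔
      (t 1 ^ 2 = 1 ∧ t 2 ^ 2 = 1 ∧ t 3 ^ c * t 4 = 1 ∧ t 3 * t 4 ^ d = 1 ∧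
        t 0 * t 1 * t 2 * t 3 * t 4 = 1) := by
  rw [mem_gammaLoop_iff]
  simp only [prodChar_apply]
  constructor
  · rintro ⟨⟨h1, h2, h3, h4⟩, h5⟩
    rw [h5] at h1 h2 h3 h4
    simp only [inv_one, mul_one] at h1 h2 h3 h4
    exact ⟨h1, h2, h3, h4, h5⟩
  · rintro ⟨h1, h2, h3, h4, h5⟩
    rw [h5]
    simp [h1, h2, h3, h4]

lemma t3_pow (c d : ℕ) (t : Fin 5 → ℂˣ) (h3 : t 3 ^ c * t 4 = 1) (h4 : t 3 * t 4 ^ d = 1) :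
    t 3 ^ (c * d - 1) = 1 ∧ t 4 = (t 3 ^ c)⁻¹ := by
  have ht4 : t 4 = (t 3 ^ c)⁻¹ := eq_inv_of_mul_eq_one_left (by rw [mul_comm]; exact h3)
  refine ⟨?_, ht4⟩
  rcases Nat.eq_zero_or_pos (c * d) with h | h
  · simp [h]
  have key : t 3 ^ (c * d) = t 3 := by
    have : t 4 ^ d = (t 3)⁻¹ := eq_inv_of_mul_eq_one_left (by rw [mul_comm]; exact h4)
    rw [ht4, inv_pow, ← pow_mul] at this
    rw [← inv_inv (t 3 ^ (c*d)), this, inv_inv]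
  have : t 3 ^ (c * d - 1) * t 3 = t 3 := by
    rw [← pow_succ, Nat.sub_add_cancel h, key]
  exact mul_right_cancel (by rw [this, one_mul])

noncomputable section

variable (c d : ℕ)

abbrev K (c d : ℕ) := MonoidHom.ker (prodChar.domRestrict (gammaLoop c d))

def φ (c d : ℕ) : K c d →*
    rootsOfUnity 2 ℂ × rootsOfUnity 2 ℂ × rootsOfUnity (c * d - 1) ℂ where
  toFun x :=
    have h : ((x : gammaLoop c d) : Fin 5 → ℂˣ) ∈ gammaLoop c d ∧
        prodChar ((x : gammaLoop c d) : Fin 5 → ℂˣ) = 1 := ⟨(x : gammaLoop c d).2, x.2⟩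
    have h' := (ker_iff c d _).1 h
    ⟨⟨_, (mem_rootsOfUnity _ _).2 h'.1⟩, ⟨_, (mem_rootsOfUnity _ _).2 h'.2.1⟩,
      ⟨_, (mem_rootsOfUnity _ _).2 (t3_pow c d _ h'.2.2.1 h'.2.2.2.1).1⟩⟩
  map_one' := rfl
  map_mul' x y := rfl

lemma φ_bij (h1cd : 1 ≤ c * d) : Function.Bijective (φ c d) := by
  constructor
  · rintro ⟨⟨t, htΓ⟩, htχ⟩ ⟨⟨s, hsΓ⟩, hsχ⟩ h
    have ht := (ker_iff c d t).1 ⟨htΓ, htχ⟩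
    have hs := (ker_iff c d s).1 ⟨hsΓ, hsχ⟩
    simp only [φ, MonoidHom.coe_mk, OneHom.coe_mk, Prod.mk.injEq, Subtype.mk.injEq] at h
    obtain ⟨h1, h2, h3⟩ := h
    have ht4 := (t3_pow c d t ht.2.2.1 ht.2.2.2.1).2
    have hs4 := (t3_pow c d s hs.2.2.1 hs.2.2.2.1).2
    have e4 : t 4 = s 4 := by rw [ht4, hs4, h3]
    have e0 : t 0 = s 0 := by
      have := ht.2.2.2.2
      rw [h1, h2, h3, e4] at this
      have := this.trans hs.2.2.2.2.symm
      exact mul_right_cancel (mul_right_cancel (mul_right_cancel (mul_right_cancel this)))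
    refine Subtype.ext (Subtype.ext (funext fun i => ?_))
    fin_cases i
    exacts [e0, h1, h2, h3, e4]
  · rintro ⟨⟨a, ha⟩, ⟨b, hb⟩, ⟨z, hz⟩⟩
    rw [mem_rootsOfUnity] at ha hb hz
    set t : Fin 5 → ℂˣ := ![(a * b * z * (z ^ c)⁻¹)⁻¹, a, b, z, (z ^ c)⁻¹] with htdef
    have ht0 : t 0 = (a * b * z * (z ^ c)⁻¹)⁻¹ := rfl
    have ht1 : t 1 = a := rfl
    have ht2 : t 2 = b := rfl
    have ht3 : t 3 = z := rfl
    have ht4 : t 4 = (z ^ c)⁻¹ := rfl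
    have hzc : z ^ (c * d) = z := by
      rw [← Nat.sub_add_cancel h1cd, pow_succ, hz, one_mul]
    have hmem : t ∈ gammaLoop c d ∧ prodChar t = 1 := by
      rw [ker_iff]
      refine ⟨by rw [ht1]; exact ha, by rw [ht2]; exact hb,
        by rw [ht3, ht4, mul_inv_cancel], ?_, ?_⟩
      · rw [ht3, ht4, inv_pow, ← pow_mul, hzc, mul_inv_cancel]
      · rw [ht0, ht1, ht2, ht3, ht4]; group
    refine ⟨⟨⟨t, hmem.1⟩, hmem.2⟩, ?_⟩
    simp only [φ, MonoidHom.coe_mk, OneHom.coe_mk]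
    rfl

/-- The kernel of the character `χ(t₀,…,t₄) = t₀t₁t₂t₃t₄` on the maximal symmetry
group of the loop-type polynomial is isomorphic to `ℤ/2 × ℤ/2 × ℤ/(cd-1)`. -/
theorem ker_char_gammaLoop (c d : ℕ) (hc : 2 ≤ c) (hd : 2 ≤ d) :
    Nonempty
      ((MonoidHom.ker (prodChar.domRestrict (gammaLoop c d))) ≃*
        Multiplicative (ZMod 2) × Multiplicative (ZMod 2) ×
          Multiplicative (ZMod (c * d - 1))) := by
  have h4cd : 4 ≤ c * d := Nat.mul_le_mul hc hd
  have hn : 0 < c * d - 1 := by omega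
  have : NeZero (c * d - 1) := ⟨hn.ne'⟩
  have e1 := MulEquiv.ofBijective _ (φ_bij c d (by omega))
  have key : ∀ (n : ℕ) [NeZero n],
      Nonempty (rootsOfUnity n ℂ ≃* Multiplicative (ZMod n)) := by
    intro n _
    refine ⟨mulEquivOfCyclicCardEq ?_⟩
    rw [Complex.card_rootsOfUnity, Nat.card_eq_fintype_card,
      Fintype.card_multiplicative, ZMod.card]
  obtain ⟨e2⟩ := key 2
  obtain ⟨e3⟩ := key (c * d - 1)
  exact ⟨e1.trans (e2.prodCongr (e2.prodCongr e3))⟩
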